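/- Fix θ > 0, n ≥ 1 and m ∈ [0,∞], and let w : ℝ → (0,∞) be a log-concave function (positive and continuous on [0, m + (n−1)θ], decaying fast enough when m = ∞ so that the normalizing constant is finite). Consider the discrete β-ensemble P_n^{θ,m} on tuples of nonnegative integers λ_1 ≥ λ_2 ≥ ⋯ ≥ λ_n with λ_1 ≤ m + (n−1)θ, with probability proportional to ∏_{1≤i<j≤n} Q_θ(λ_i − λ_j + (j−i)θ) · ∏_{j=1}^n w(λ_j + (n−j)θ), where Q_θ(x) = Γ(x+1)Γ(x+θ)/(Γ(x+1−θ)Γ(x)). Then the distribution of λ_1 under P_n^{θ,m} is log-concave: P(λ_1 = k−1)·P(λ_1 = k+1) ≤ P(λ_1 = k)² for all integers k ≥ 1. -/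

import Mathlib

open scoped BigOperators ENNReal

noncomputable section

/-- The interaction `Q_θ(x) = Γ(x+1)Γ(x+θ)/(Γ(x+1-θ)Γ(x))`. -/
def Qtheta (θ x : ℝ) : ℝ :=
  Real.Gamma (x + 1) * Real.Gamma (x + θ) / (Real.Gamma (x + 1 - θ) * Real.Gamma x)

/-- Unnormalized weight of `λ₁ ≥ λ₂ ≥ ⋯ ≥ λ_n` in the discrete β-ensemble:
`∏_{i<j} Q_θ(λ_i − λ_j + (j−i)θ) · ∏_j w(λ_j + (n−j)θ)` (indices `0`-based). -/
def dbetaWeight (n : ℕ) (θ : ℝ) (w : ℝ → ℝ) (l : Fin n → ℕ) : ℝ :=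
  (∏ i : Fin n, ∏ j : Fin n, if i < j then
      Qtheta θ (((l i : ℝ) - (l j : ℝ)) + (((j : ℕ) - (i : ℕ) : ℕ) : ℝ) * θ) else 1) *
    ∏ j : Fin n, w ((l j : ℝ) + (((n - 1 - (j : ℕ) : ℕ)) : ℝ) * θ)

/-- The support constraint of `P_n^{θ,m}`: weakly decreasing tuples of naturals whose
largest entry `λ₁` satisfies `λ₁ ≤ m + (n−1)θ` (with `m ∈ [0,∞]`). -/
def dbetaAdmissible (n : ℕ) (hn : 0 < n) (θ : ℝ) (m : ℝ≥0∞) (l : Fin n → ℕ) : Prop :=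
  Antitone l ∧ ((l ⟨0, hn⟩ : ℕ) : ℝ≥0∞) ≤ m + ENNReal.ofReal (((n - 1 : ℕ) : ℝ) * θ)

/-- `P_n^{θ,m}(λ₁ = k)`. -/
def dbetaTopProb (n : ℕ) (hn : 0 < n) (θ : ℝ) (m : ℝ≥0∞) (w : ℝ → ℝ) (k : ℕ) : ℝ :=
  (∑' l : {l : Fin n → ℕ // dbetaAdmissible n hn θ m l ∧ l ⟨0, hn⟩ = k},
      dbetaWeight n θ w l.1) /
    ∑' l : {l : Fin n → ℕ // dbetaAdmissible n hn θ m l}, dbetaWeight n θ w l.1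


section AuxiliaryLemmas

lemma Qtheta_pos {θ x : ℝ} (hθ : 0 < θ) (hx : θ ≤ x) : 0 < Qtheta θ x := by
  have hx0 : 0 < x := hθ.trans_le hx
  exact div_pos (mul_pos (Real.Gamma_pos_of_pos (by linarith)) (Real.Gamma_pos_of_pos (by linarith)))
    (mul_pos (Real.Gamma_pos_of_pos (by linarith)) (Real.Gamma_pos_of_pos hx0))

lemma Qtheta_succ {θ x : ℝ} (hθ : 0 < θ) (hx : θ ≤ x) :
    Qtheta θ (x + 1) = ((x + 1) * (x + θ)) / ((x + 1 - θ) * x) * Qtheta θ x := by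
  have hx0 : 0 < x := hθ.trans_le hx
  have h1 : x + 1 ≠ 0 := by linarith
  have h2 : x + θ ≠ 0 := by linarith
  have h3 : x + 1 - θ ≠ 0 := by linarith
  have h4 : x ≠ 0 := ne_of_gt hx0
  have e1 : Real.Gamma (x + 1 + 1) = (x + 1) * Real.Gamma (x + 1) := Real.Gamma_add_one h1
  have e2 : Real.Gamma (x + 1 + θ) = (x + θ) * Real.Gamma (x + θ) := by
    rw [show x + 1 + θ = (x + θ) + 1 by ring, Real.Gamma_add_one h2]
  have e3 : Real.Gamma (x + 1 + 1 - θ) = (x + 1 - θ) * Real.Gamma (x + 1 - θ) := by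
    rw [show x + 1 + 1 - θ = (x + 1 - θ) + 1 by ring, Real.Gamma_add_one h3]
  have e4 : Real.Gamma (x + 1) = x * Real.Gamma x := Real.Gamma_add_one h4
  have hG2 : Real.Gamma (x + 1 - θ) ≠ 0 := ne_of_gt (Real.Gamma_pos_of_pos (by linarith))
  have hG4 : Real.Gamma x ≠ 0 := ne_of_gt (Real.Gamma_pos_of_pos hx0)
  have hG1 : Real.Gamma (x + 1) ≠ 0 := ne_of_gt (Real.Gamma_pos_of_pos (by linarith))
  unfold Qtheta
  rw [e1, e2, e3]
  rw [e4]
  field_simp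

lemma Qtheta_step {θ x y : ℝ} (hθ : 0 < θ) (hx : θ ≤ x) (hxy : x + 1 ≤ y) :
    Qtheta θ x * Qtheta θ y ≤ Qtheta θ (x + 1) * Qtheta θ (y - 1) := by
  have hx0 : 0 < x := hθ.trans_le hx
  have hy1 : θ ≤ y - 1 := by linarith
  have hy0 : 0 < y - 1 := by linarith
  have hQx : 0 < Qtheta θ x := Qtheta_pos hθ hx
  have hQy1 : 0 < Qtheta θ (y - 1) := Qtheta_pos hθ hy1
  have ey : Qtheta θ y = (y * (y - 1 + θ)) / ((y - θ) * (y - 1)) * Qtheta θ (y - 1) := by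
    have h := Qtheta_succ hθ hy1
    rw [show y - 1 + 1 = y by ring] at h
    exact h
  have ex : Qtheta θ (x + 1) = ((x + 1) * (x + θ)) / ((x + 1 - θ) * x) * Qtheta θ x :=
    Qtheta_succ hθ hx
  rw [ey, ex]
  have hd1 : 0 < (y - θ) * (y - 1) := mul_pos (by linarith) hy0
  have hd2 : 0 < (x + 1 - θ) * x := mul_pos (by linarith) hx0
  have key : (y * (y - 1 + θ)) / ((y - θ) * (y - 1)) ≤ ((x + 1) * (x + θ)) / ((x + 1 - θ) * x) := by
    rw [div_le_div_iff₀ hd1 hd2]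
    nlinarith [mul_nonneg (sub_nonneg.2 hx) (sub_nonneg.2 (by linarith : x + 1 ≤ y)),
      mul_nonneg (mul_nonneg (sub_nonneg.2 hx) (sub_nonneg.2 hx)) (sub_nonneg.2 (by linarith : x + 1 ≤ y)),
      mul_nonneg (mul_nonneg (sub_nonneg.2 (by linarith : x + 1 ≤ y)) (sub_nonneg.2 (by linarith : x + 1 ≤ y))) hθ.le,
      mul_pos hθ hθ, mul_pos (mul_pos hθ hθ) hθ,
      mul_nonneg (sub_nonneg.2 (by linarith : x + 1 ≤ y)) hθ.le]
  calc Qtheta θ x * ((y * (y - 1 + θ)) / ((y - θ) * (y - 1)) * Qtheta θ (y - 1))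
      = ((y * (y - 1 + θ)) / ((y - θ) * (y - 1))) * (Qtheta θ x * Qtheta θ (y - 1)) := by
        ring
    _ ≤ (((x + 1) * (x + θ)) / ((x + 1 - θ) * x)) * (Qtheta θ x * Qtheta θ (y - 1)) := by
        apply mul_le_mul_of_nonneg_right key (by positivity)
    _ = ((x + 1) * (x + θ)) / ((x + 1 - θ) * x) * Qtheta θ x * Qtheta θ (y - 1) := by ring

lemma Qtheta_bal {θ : ℝ} (hθ : 0 < θ) :
    ∀ (d : ℕ) (x y : ℝ), θ ≤ x → x + d ≤ y - d →
      Qtheta θ x * Qtheta θ y ≤ Qtheta θ (x + d) * Qtheta θ (y - d) := by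
  intro d
  induction d with
  | zero => intro x y hx _; simp
  | succ d ih =>
    intro x y hx hxy
    have hd : (0:ℝ) ≤ d := Nat.cast_nonneg d
    have hcast : ((d + 1 : ℕ) : ℝ) = (d : ℝ) + 1 := by push_cast; ring
    rw [hcast] at hxy ⊢
    have h1 : x + 1 ≤ y := by linarith
    calc Qtheta θ x * Qtheta θ y ≤ Qtheta θ (x + 1) * Qtheta θ (y - 1) := Qtheta_step hθ hx h1
      _ ≤ Qtheta θ ((x + 1) + d) * Qtheta θ ((y - 1) - d) := ih (x + 1) (y - 1) (by linarith) (by linarith)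
      _ = Qtheta θ (x + ((d:ℝ) + 1)) * Qtheta θ (y - ((d:ℝ) + 1)) := by ring_nf

lemma Qtheta_pair {θ c : ℝ} (hθ : 0 < θ) (hc : θ ≤ c) {A1 A2 I S : ℤ}
    (hA1 : 0 ≤ A1) (hA2 : 0 ≤ A2) (hsum : I + S = A1 + A2)
    (hmin : min A1 A2 ≤ min I S) (hmax : max I S ≤ max A1 A2) :
    Qtheta θ ((A1 : ℝ) + c) * Qtheta θ ((A2 : ℝ) + c) ≤
      Qtheta θ ((I : ℝ) + c) * Qtheta θ ((S : ℝ) + c) := by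
  set x : ℝ := (min A1 A2 : ℤ) + c with hx
  set y : ℝ := (max A1 A2 : ℤ) + c with hy
  have hminmax : min A1 A2 + max A1 A2 = A1 + A2 := min_add_max A1 A2
  have hIS : min I S + max I S = I + S := min_add_max I S
  have hd0 : 0 ≤ min I S - min A1 A2 := by omega
  set d : ℕ := (min I S - min A1 A2).toNat with hdd
  have hdc : (d : ℝ) = ((min I S : ℤ) : ℝ) - ((min A1 A2 : ℤ) : ℝ) := by
    have h := Int.toNat_of_nonneg hd0
    exact_mod_cast congrArg (fun z : ℤ => (z : ℝ)) h
  have hθx : θ ≤ x := by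
    have : (0:ℝ) ≤ ((min A1 A2 : ℤ) : ℝ) := by
      have : (0:ℤ) ≤ min A1 A2 := le_min hA1 hA2
      exact_mod_cast this
    rw [hx]; linarith
  have hxy : x + d ≤ y - d := by
    rw [hx, hy, hdc]
    have h1 : (min I S : ℤ) ≤ max I S := min_le_max
    have : ((min I S : ℤ):ℝ) ≤ ((max I S : ℤ):ℝ) := by exact_mod_cast h1
    have e : ((max I S : ℤ):ℝ) = ((max A1 A2 : ℤ):ℝ) - (((min I S : ℤ):ℝ) - ((min A1 A2 : ℤ):ℝ)) := by
      have : (max I S : ℤ) = max A1 A2 - (min I S - min A1 A2) := by omega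
      exact_mod_cast congrArg (fun z : ℤ => (z : ℝ)) this
    linarith
  have hQ := Qtheta_bal hθ d x y hθx hxy
  have e1 : Qtheta θ x * Qtheta θ y = Qtheta θ ((A1:ℝ) + c) * Qtheta θ ((A2:ℝ) + c) := by
    rcases le_total A1 A2 with h | h
    · rw [hx, hy, min_eq_left h, max_eq_right h]
    · rw [hx, hy, min_eq_right h, max_eq_left h]; ring
  have e2 : Qtheta θ (x + d) * Qtheta θ (y - d) = Qtheta θ ((I:ℝ) + c) * Qtheta θ ((S:ℝ) + c) := by
    have ex : x + d = ((min I S : ℤ):ℝ) + c := by rw [hx, hdc]; ring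
    have ey : y - d = ((max I S : ℤ):ℝ) + c := by
      rw [hy, hdc]
      have : (max A1 A2 : ℤ) - (min I S - min A1 A2) = max I S := by omega
      have := congrArg (fun z : ℤ => (z : ℝ)) this
      push_cast at this ⊢
      linarith
    rw [ex, ey]
    rcases le_total I S with h | h
    · rw [min_eq_left h, max_eq_right h]
    · rw [min_eq_right h, max_eq_left h]; ring
  rw [e1, e2] at hQ
  exact hQ

lemma w_pair (w : ℝ → ℝ) (hwpos : ∀ x, 0 < w x)
    (hwlc : ∀ x y s : ℝ, 0 ≤ s → s ≤ 1 → w x ^ s * w y ^ (1 - s) ≤ w (s * x + (1 - s) * y))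
    {x y : ℝ} (h : x + 1 ≤ y) : w x * w y ≤ w (x + 1) * w (y - 1) := by
  have hyx : (0:ℝ) < y - x := by linarith
  set s : ℝ := 1 / (y - x) with hs
  have hs0 : 0 ≤ s := by positivity
  have hs1 : s ≤ 1 := by rw [hs, div_le_one hyx]; linarith
  have e1 : s * y + (1 - s) * x = x + 1 := by rw [hs]; field_simp; ring
  have e2 : s * x + (1 - s) * y = y - 1 := by rw [hs]; field_simp; ring
  have h1 := hwlc y x s hs0 hs1
  have h2 := hwlc x y s hs0 hs1
  rw [e1] at h1
  rw [e2] at h2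
  have hx := hwpos x
  have hy := hwpos y
  have key : (w y ^ s * w x ^ (1 - s)) * (w x ^ s * w y ^ (1 - s)) = w x * w y := by
    rw [show (w y ^ s * w x ^ (1 - s)) * (w x ^ s * w y ^ (1 - s))
        = (w x ^ (1 - s) * w x ^ s) * (w y ^ s * w y ^ (1 - s)) by ring,
      ← Real.rpow_add hx, ← Real.rpow_add hy]
    norm_num
  calc w x * w y = (w y ^ s * w x ^ (1 - s)) * (w x ^ s * w y ^ (1 - s)) := key.symm
    _ ≤ w (x + 1) * w (y - 1) := by
        apply mul_le_mul h1 h2 (by positivity) (hwpos _).le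

section Lattice

/-- `ℤ`-valued version of the weight. -/
def WZ (n : ℕ) (θ : ℝ) (w : ℝ → ℝ) (v : Fin n → ℤ) : ℝ :=
  (∏ i : Fin n, ∏ j : Fin n, if i < j then
      Qtheta θ (((v i : ℝ) - (v j : ℝ)) + (((j : ℕ) - (i : ℕ) : ℕ) : ℝ) * θ) else 1) *
    ∏ j : Fin n, w ((v j : ℝ) + (((n - 1 - (j : ℕ) : ℕ)) : ℝ) * θ)

lemma WZ_cast (n : ℕ) (θ : ℝ) (w : ℝ → ℝ) (l : Fin n → ℕ) :
    WZ n θ w (fun i => (l i : ℤ)) = dbetaWeight n θ w l := by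
  simp only [WZ, dbetaWeight, Int.cast_natCast]

lemma theta_le_arg {n : ℕ} {θ : ℝ} (hθ : 0 < θ) {v : Fin n → ℤ} (hv : Antitone v)
    {i j : Fin n} (hij : i < j) :
    θ ≤ ((v i : ℝ) - (v j : ℝ)) + (((j : ℕ) - (i : ℕ) : ℕ) : ℝ) * θ := by
  have h1 : v j ≤ v i := hv hij.le
  have h1' : ((v j : ℤ) : ℝ) ≤ ((v i : ℤ) : ℝ) := by exact_mod_cast h1
  have h2 : 1 ≤ ((j : ℕ) - (i : ℕ) : ℕ) := by
    have : (i : ℕ) < (j : ℕ) := hij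
    omega
  have h2' : (1 : ℝ) ≤ (((j : ℕ) - (i : ℕ) : ℕ) : ℝ) := by exact_mod_cast h2
  nlinarith

lemma WZ_nonneg {n : ℕ} {θ : ℝ} (hθ : 0 < θ) {w : ℝ → ℝ} (hwpos : ∀ x, 0 < w x)
    {v : Fin n → ℤ} (hv : Antitone v) : 0 ≤ WZ n θ w v := by
  unfold WZ
  apply mul_nonneg
  · apply Finset.prod_nonneg
    intro i _
    apply Finset.prod_nonneg
    intro j _
    by_cases h : i < j
    · rw [if_pos h]
      exact (Qtheta_pos hθ (theta_le_arg hθ hv h)).le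
    · rw [if_neg h]; norm_num
  · exact Finset.prod_nonneg fun j _ => (hwpos _).le

lemma dbetaWeight_nonneg {n : ℕ} {θ : ℝ} (hθ : 0 < θ) {w : ℝ → ℝ} (hwpos : ∀ x, 0 < w x)
    {l : Fin n → ℕ} (hl : Antitone l) : 0 ≤ dbetaWeight n θ w l := by
  rw [← WZ_cast]
  exact WZ_nonneg hθ hwpos (fun i j hij => by exact_mod_cast hl hij)

end Lattice

section Core

lemma theta_le_coef {n : ℕ} {θ : ℝ} (hθ : 0 < θ) {i j : Fin n} (hij : i < j) :
    θ ≤ (((j : ℕ) - (i : ℕ) : ℕ) : ℝ) * θ := by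
  have h2 : 1 ≤ ((j : ℕ) - (i : ℕ) : ℕ) := by
    have : (i : ℕ) < (j : ℕ) := hij
    omega
  have h2' : (1 : ℝ) ≤ (((j : ℕ) - (i : ℕ) : ℕ) : ℝ) := by exact_mod_cast h2
  nlinarith

/-- A single interaction factor. -/
def Qfac (n : ℕ) (θ : ℝ) (v : Fin n → ℤ) (i j : Fin n) : ℝ :=
  if i < j then Qtheta θ (((v i : ℝ) - (v j : ℝ)) + (((j : ℕ) - (i : ℕ) : ℕ) : ℝ) * θ) else 1

/-- A single external-weight factor. -/
def Wfac (n : ℕ) (θ : ℝ) (w : ℝ → ℝ) (v : Fin n → ℤ) (j : Fin n) : ℝ :=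
  w ((v j : ℝ) + (((n - 1 - (j : ℕ) : ℕ)) : ℝ) * θ)

lemma WZ_eq (n : ℕ) (θ : ℝ) (w : ℝ → ℝ) (v : Fin n → ℤ) :
    WZ n θ w v = (∏ i : Fin n, ∏ j : Fin n, Qfac n θ v i j) * ∏ j : Fin n, Wfac n θ w v j := rfl

lemma Qfac_nonneg {n : ℕ} {θ : ℝ} (hθ : 0 < θ) {v : Fin n → ℤ} (hv : Antitone v)
    (i j : Fin n) : 0 ≤ Qfac n θ v i j := by
  unfold Qfac
  by_cases h : i < j
  · rw [if_pos h]; exact (Qtheta_pos hθ (theta_le_arg hθ hv h)).le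
  · rw [if_neg h]; norm_num

lemma Qfac_pair {n : ℕ} {θ : ℝ} (hθ : 0 < θ) {a b : Fin n → ℤ}
    (ha : Antitone a) (hb : Antitone b) (i j : Fin n) :
    Qfac n θ a i j * Qfac n θ (b + 1) i j ≤
      Qfac n θ (a ⊓ b + 1) i j * Qfac n θ (a ⊔ b) i j := by
  unfold Qfac
  by_cases h : i < j
  · simp only [if_pos h, Pi.add_apply, Pi.one_apply, Pi.inf_apply, Pi.sup_apply]
    have hc : θ ≤ (((j : ℕ) - (i : ℕ) : ℕ) : ℝ) * θ := theta_le_coef hθ h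
    have hA1 : (0:ℤ) ≤ a i - a j := sub_nonneg.2 (ha h.le)
    have hA2 : (0:ℤ) ≤ b i - b j := sub_nonneg.2 (hb h.le)
    have hmm1 : a i ⊓ b i + (a i ⊔ b i) = a i + b i := inf_add_sup (a i) (b i)
    have hmm2 : a j ⊓ b j + (a j ⊔ b j) = a j + b j := inf_add_sup (a j) (b j)
    have hle1 : a i ⊓ b i ≤ a i := inf_le_left
    have hle2 : a i ⊓ b i ≤ b i := inf_le_right
    have hle3 : a j ≤ a j ⊔ b j := le_sup_left
    have hle4 : b j ≤ a j ⊔ b j := le_sup_right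
    have hle5 : a j ⊓ b j ≤ a j := inf_le_left
    have hle6 : a j ⊓ b j ≤ b j := inf_le_right
    have hle7 : a i ≤ a i ⊔ b i := le_sup_left
    have hle8 : b i ≤ a i ⊔ b i := le_sup_right
    have hcase : (a i ⊓ b i = a i ∧ a i ⊔ b i = b i) ∨ (a i ⊓ b i = b i ∧ a i ⊔ b i = a i) := by
      rcases le_total (a i) (b i) with hh | hh
      · exact Or.inl ⟨inf_eq_left.2 hh, sup_eq_right.2 hh⟩
      · exact Or.inr ⟨inf_eq_right.2 hh, sup_eq_left.2 hh⟩
    have hcase' : (a j ⊓ b j = a j ∧ a j ⊔ b j = b j) ∨ (a j ⊓ b j = b j ∧ a j ⊔ b j = a j) := by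
      rcases le_total (a j) (b j) with hh | hh
      · exact Or.inl ⟨inf_eq_left.2 hh, sup_eq_right.2 hh⟩
      · exact Or.inr ⟨inf_eq_right.2 hh, sup_eq_left.2 hh⟩
    have hpair := Qtheta_pair (θ := θ) (c := (((j : ℕ) - (i : ℕ) : ℕ) : ℝ) * θ) hθ hc
      (A1 := a i - a j) (A2 := b i - b j)
      (I := (a i ⊓ b i) - (a j ⊓ b j)) (S := (a i ⊔ b i) - (a j ⊔ b j)) hA1 hA2
      (by omega) (by omega) (by omega)
    have e1 : ((a i : ℝ) - (a j : ℝ)) + (((j : ℕ) - (i : ℕ) : ℕ) : ℝ) * θ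
        = ((a i - a j : ℤ) : ℝ) + (((j : ℕ) - (i : ℕ) : ℕ) : ℝ) * θ := by push_cast; ring
    have e2 : (((b + 1) i : ℝ) - ((b + 1) j : ℝ)) + (((j : ℕ) - (i : ℕ) : ℕ) : ℝ) * θ
        = ((b i - b j : ℤ) : ℝ) + (((j : ℕ) - (i : ℕ) : ℕ) : ℝ) * θ := by
      simp only [Pi.add_apply, Pi.one_apply]; push_cast; ring
    have e3 : (((a ⊓ b + 1) i : ℝ) - ((a ⊓ b + 1) j : ℝ)) + (((j : ℕ) - (i : ℕ) : ℕ) : ℝ) * θ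
        = (((a i ⊓ b i) - (a j ⊓ b j) : ℤ) : ℝ) + (((j : ℕ) - (i : ℕ) : ℕ) : ℝ) * θ := by
      simp only [Pi.add_apply, Pi.one_apply, Pi.inf_apply]; push_cast; ring
    have e4 : (((a ⊔ b) i : ℝ) - ((a ⊔ b) j : ℝ)) + (((j : ℕ) - (i : ℕ) : ℕ) : ℝ) * θ
        = (((a i ⊔ b i) - (a j ⊔ b j) : ℤ) : ℝ) + (((j : ℕ) - (i : ℕ) : ℕ) : ℝ) * θ := by
      simp only [Pi.sup_apply]; push_cast; ring
    simp only [Pi.add_apply, Pi.one_apply, Pi.inf_apply, Pi.sup_apply] at e1 e2 e3 e4 ⊢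
    rw [e1, e2, e3, e4]
    exact hpair
  · simp only [if_neg h]; norm_num

end Core

section Core2

lemma Wfac_pair {n : ℕ} (θ : ℝ) {w : ℝ → ℝ} (hwpos : ∀ x, 0 < w x)
    (hwlc : ∀ x y s : ℝ, 0 ≤ s → s ≤ 1 → w x ^ s * w y ^ (1 - s) ≤ w (s * x + (1 - s) * y))
    (a b : Fin n → ℤ) (j : Fin n) :
    Wfac n θ w a j * Wfac n θ w (b + 1) j ≤
      Wfac n θ w (a ⊓ b + 1) j * Wfac n θ w (a ⊔ b) j := by
  unfold Wfac
  simp only [Pi.add_apply, Pi.one_apply, Pi.inf_apply, Pi.sup_apply]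
  set c : ℝ := (((n - 1 - (j : ℕ) : ℕ)) : ℝ) * θ with hc
  rcases le_total (a j) (b j) with hab | hab
  · rw [inf_eq_left.2 hab, sup_eq_right.2 hab]
    have h1 : ((a j : ℝ) + c) + 1 ≤ ((b j + 1 : ℤ) : ℝ) + c := by
      have : ((a j : ℤ) : ℝ) ≤ ((b j : ℤ) : ℝ) := by exact_mod_cast hab
      push_cast
      linarith
    have := w_pair w hwpos hwlc h1
    have e1 : ((a j : ℝ) + c) + 1 = ((a j + 1 : ℤ) : ℝ) + c := by push_cast; ring
    have e2 : (((b j + 1 : ℤ) : ℝ) + c) - 1 = ((b j : ℤ) : ℝ) + c := by push_cast; ring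
    rw [e1, e2] at this
    exact this
  · rw [inf_eq_right.2 hab, sup_eq_left.2 hab]
    exact le_of_eq (mul_comm _ _)

lemma core {n : ℕ} {θ : ℝ} (hθ : 0 < θ) {w : ℝ → ℝ} (hwpos : ∀ x, 0 < w x)
    (hwlc : ∀ x y s : ℝ, 0 ≤ s → s ≤ 1 → w x ^ s * w y ^ (1 - s) ≤ w (s * x + (1 - s) * y))
    {a b : Fin n → ℤ} (ha : Antitone a) (hb : Antitone b) :
    WZ n θ w a * WZ n θ w (b + 1) ≤ WZ n θ w (a ⊓ b + 1) * WZ n θ w (a ⊔ b) := by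
  have hinf : Antitone (a ⊓ b + 1 : Fin n → ℤ) := fun i j hij => by
    simp only [Pi.add_apply, Pi.one_apply, Pi.inf_apply]
    exact add_le_add_left (inf_le_inf (ha hij) (hb hij)) 1
  have hsup : Antitone (a ⊔ b : Fin n → ℤ) := fun i j hij => by
    simp only [Pi.sup_apply]
    exact sup_le_sup (ha hij) (hb hij)
  rw [WZ_eq, WZ_eq, WZ_eq, WZ_eq]
  have keyQ : (∏ i : Fin n, ∏ j : Fin n, Qfac n θ a i j) *
      (∏ i : Fin n, ∏ j : Fin n, Qfac n θ (b + 1) i j) ≤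
      (∏ i : Fin n, ∏ j : Fin n, Qfac n θ (a ⊓ b + 1) i j) *
      (∏ i : Fin n, ∏ j : Fin n, Qfac n θ (a ⊔ b) i j) := by
    rw [← Finset.prod_mul_distrib, ← Finset.prod_mul_distrib]
    apply Finset.prod_le_prod
    · intro i _
      rw [← Finset.prod_mul_distrib]
      exact Finset.prod_nonneg fun j _ =>
        mul_nonneg (Qfac_nonneg hθ ha i j) (Qfac_nonneg hθ (fun p q hpq => by
          simp only [Pi.add_apply, Pi.one_apply]; exact add_le_add_left (hb hpq) 1) i j)
    · intro i _
      rw [← Finset.prod_mul_distrib, ← Finset.prod_mul_distrib]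
      apply Finset.prod_le_prod
      · intro j _
        exact mul_nonneg (Qfac_nonneg hθ ha i j) (Qfac_nonneg hθ (fun p q hpq => by
          simp only [Pi.add_apply, Pi.one_apply]; exact add_le_add_left (hb hpq) 1) i j)
      · intro j _
        exact Qfac_pair hθ ha hb i j
  have keyW : (∏ j : Fin n, Wfac n θ w a j) * (∏ j : Fin n, Wfac n θ w (b + 1) j) ≤
      (∏ j : Fin n, Wfac n θ w (a ⊓ b + 1) j) * (∏ j : Fin n, Wfac n θ w (a ⊔ b) j) := by
    rw [← Finset.prod_mul_distrib, ← Finset.prod_mul_distrib]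
    apply Finset.prod_le_prod
    · intro j _
      exact mul_nonneg (hwpos _).le (hwpos _).le
    · intro j _
      exact Wfac_pair θ hwpos hwlc a b j
  have h1 : 0 ≤ (∏ j : Fin n, Wfac n θ w a j) * (∏ j : Fin n, Wfac n θ w (b + 1) j) :=
    mul_nonneg (Finset.prod_nonneg fun j _ => (hwpos _).le)
      (Finset.prod_nonneg fun j _ => (hwpos _).le)
  have h2 : 0 ≤ (∏ i : Fin n, ∏ j : Fin n, Qfac n θ (a ⊓ b + 1) i j) *
      (∏ i : Fin n, ∏ j : Fin n, Qfac n θ (a ⊔ b) i j) :=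
    mul_nonneg
      (Finset.prod_nonneg fun i _ => Finset.prod_nonneg fun j _ => Qfac_nonneg hθ hinf i j)
      (Finset.prod_nonneg fun i _ => Finset.prod_nonneg fun j _ => Qfac_nonneg hθ hsup i j)
  calc (∏ i : Fin n, ∏ j : Fin n, Qfac n θ a i j) * (∏ j : Fin n, Wfac n θ w a j) *
        ((∏ i : Fin n, ∏ j : Fin n, Qfac n θ (b + 1) i j) * ∏ j : Fin n, Wfac n θ w (b + 1) j)
      = ((∏ i : Fin n, ∏ j : Fin n, Qfac n θ a i j) *
          (∏ i : Fin n, ∏ j : Fin n, Qfac n θ (b + 1) i j)) *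
        ((∏ j : Fin n, Wfac n θ w a j) * (∏ j : Fin n, Wfac n θ w (b + 1) j)) := by ring
    _ ≤ ((∏ i : Fin n, ∏ j : Fin n, Qfac n θ (a ⊓ b + 1) i j) *
          (∏ i : Fin n, ∏ j : Fin n, Qfac n θ (a ⊔ b) i j)) *
        ((∏ j : Fin n, Wfac n θ w (a ⊓ b + 1) j) * (∏ j : Fin n, Wfac n θ w (a ⊔ b) j)) :=
      mul_le_mul keyQ keyW h1 h2
    _ = (∏ i : Fin n, ∏ j : Fin n, Qfac n θ (a ⊓ b + 1) i j) *
          (∏ j : Fin n, Wfac n θ w (a ⊓ b + 1) j) *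
        ((∏ i : Fin n, ∏ j : Fin n, Qfac n θ (a ⊔ b) i j) *
          ∏ j : Fin n, Wfac n θ w (a ⊔ b) j) := by ring

end Core2

section TsumFour

open Finset in
lemma tsum_four {α : Type*} [DistribLattice α] [DecidableEq α] (f₁ f₂ f₃ f₄ : α → ℝ)
    (h₁ : ∀ v, 0 ≤ f₁ v) (h₂ : ∀ v, 0 ≤ f₂ v) (h₃ : ∀ v, 0 ≤ f₃ v) (h₄ : ∀ v, 0 ≤ f₄ v)
    (hs₁ : Summable f₁) (hs₂ : Summable f₂) (hs₃ : Summable f₃) (hs₄ : Summable f₄)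
    (h : ∀ a b, f₁ a * f₂ b ≤ f₃ (a ⊓ b) * f₄ (a ⊔ b)) :
    (∑' v, f₁ v) * (∑' v, f₂ v) ≤ (∑' v, f₃ v) * (∑' v, f₄ v) := by
  set M : ℝ := (∑' v, f₃ v) * (∑' v, f₄ v) with hM
  have hM0 : 0 ≤ M := mul_nonneg (tsum_nonneg h₃) (tsum_nonneg h₄)
  have key : ∀ S T : Finset α, (∑ v ∈ S, f₁ v) * (∑ v ∈ T, f₂ v) ≤ M := by
    intro S T
    refine (four_functions_theorem f₁ f₂ f₃ f₄ (fun v => h₁ v) (fun v => h₂ v)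
      (fun v => h₃ v) (fun v => h₄ v) h S T).trans ?_
    exact mul_le_mul (Summable.sum_le_tsum _ (fun i _ => h₃ i) hs₃) (Summable.sum_le_tsum _ (fun i _ => h₄ i) hs₄)
      (Finset.sum_nonneg fun i _ => h₄ i) (tsum_nonneg h₃)
  have step1 : ∀ S : Finset α, (∑ v ∈ S, f₁ v) * (∑' v, f₂ v) ≤ M := by
    intro S
    rcases (Finset.sum_nonneg (fun i _ => h₁ i) : (0:ℝ) ≤ ∑ v ∈ S, f₁ v).eq_or_lt with hS | hS
    · rw [← hS, zero_mul]; exact hM0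
    · have hdiv : (∑' v, f₂ v) ≤ M / (∑ v ∈ S, f₁ v) := by
        apply Summable.tsum_le_of_sum_le hs₂
        intro T
        rw [le_div_iff₀ hS]
        calc (∑ v ∈ T, f₂ v) * (∑ v ∈ S, f₁ v) = (∑ v ∈ S, f₁ v) * (∑ v ∈ T, f₂ v) := mul_comm _ _
          _ ≤ M := key S T
      calc (∑ v ∈ S, f₁ v) * (∑' v, f₂ v) ≤ (∑ v ∈ S, f₁ v) * (M / (∑ v ∈ S, f₁ v)) :=
            mul_le_mul_of_nonneg_left hdiv hS.le
        _ = M := by rw [mul_comm, div_mul_cancel₀ _ (ne_of_gt hS)]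
  rcases (tsum_nonneg h₂ : (0:ℝ) ≤ ∑' v, f₂ v).eq_or_lt with h2 | h2
  · rw [← h2, mul_zero]; exact hM0
  · have hdiv : (∑' v, f₁ v) ≤ M / (∑' v, f₂ v) := by
      apply Summable.tsum_le_of_sum_le hs₁
      intro S
      rw [le_div_iff₀ h2]
      exact step1 S
    calc (∑' v, f₁ v) * (∑' v, f₂ v) ≤ (M / (∑' v, f₂ v)) * (∑' v, f₂ v) :=
          mul_le_mul_of_nonneg_right hdiv (tsum_nonneg h₂)
      _ = M := div_mul_cancel₀ _ (ne_of_gt h2)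

end TsumFour

lemma summable_subtype_and {α : Type*} (g : α → ℝ) (P Q : α → Prop)
    (hsum : Summable (fun l : {l : α // P l} => g l.1)) :
    Summable (fun l : {l : α // P l ∧ Q l} => g l.1) := by
  have hinj : Function.Injective (fun l : {l : α // P l ∧ Q l} =>
      (⟨l.1, l.2.1⟩ : {l : α // P l})) := by
    intro x y h; apply Subtype.ext; simpa using congrArg Subtype.val h
  exact hsum.comp_injective hinj

section Transfer

/-- Admissible-support predicate on `ℤ`-tuples with prescribed top entry. -/
def latP (n : ℕ) (hn : 0 < n) (k' : ℕ) : Set (Fin n → ℤ) :=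
  {v | Antitone v ∧ (∀ i, 0 ≤ v i) ∧ v ⟨0, hn⟩ = (k' : ℤ)}

/-- Weight extended by zero to the lattice of `ℤ`-tuples. -/
def latF (n : ℕ) (hn : 0 < n) (θ : ℝ) (w : ℝ → ℝ) (k' : ℕ) : (Fin n → ℤ) → ℝ :=
  (latP n hn k').indicator (WZ n θ w)

lemma latF_nonneg {n : ℕ} (hn : 0 < n) {θ : ℝ} (hθ : 0 < θ) {w : ℝ → ℝ}
    (hwpos : ∀ x, 0 < w x) (k' : ℕ) (v : Fin n → ℤ) : 0 ≤ latF n hn θ w k' v :=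
  Set.indicator_nonneg (fun u hu => WZ_nonneg hθ hwpos hu.1) v

lemma transfer {n : ℕ} (hn : 0 < n) {θ : ℝ} (hθ : 0 < θ) {m : ℝ≥0∞} {w : ℝ → ℝ}
    (hwpos : ∀ x, 0 < w x) (k' : ℕ)
    (hcap : ((k' : ℕ) : ℝ≥0∞) ≤ m + ENNReal.ofReal (((n - 1 : ℕ) : ℝ) * θ)) (t : Fin n → ℤ)
    (hsub : Summable (fun l : {l : Fin n → ℕ //
        dbetaAdmissible n hn θ m l ∧ l ⟨0, hn⟩ = k'} => dbetaWeight n θ w l.1)) :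
    Summable (fun v : Fin n → ℤ => latF n hn θ w k' (v + t)) ∧
      (∑' v : Fin n → ℤ, latF n hn θ w k' (v + t)) =
        ∑' l : {l : Fin n → ℕ // dbetaAdmissible n hn θ m l ∧ l ⟨0, hn⟩ = k'},
          dbetaWeight n θ w l.1 := by
  classical
  set g : (Fin n → ℤ) → ℝ := fun v => latF n hn θ w k' (v + t) with hg
  set ι : {l : Fin n → ℕ // dbetaAdmissible n hn θ m l ∧ l ⟨0, hn⟩ = k'} → (Fin n → ℤ) :=
    fun l => (fun i => (l.1 i : ℤ)) - t with hι
  have hιinj : Function.Injective ι := by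
    intro l l' hh
    apply Subtype.ext
    funext i
    have h1 := congrFun hh i
    simp only [hι, Pi.sub_apply] at h1
    have : (l.1 i : ℤ) = (l'.1 i : ℤ) := by omega
    exact_mod_cast this
  have hcomp : ∀ l, g (ι l) = dbetaWeight n θ w l.1 := by
    intro l
    have eadd : ι l + t = fun i => (l.1 i : ℤ) := by
      funext i; simp [hι]
    rw [hg]
    simp only []
    rw [eadd]
    have hmem : (fun i => (l.1 i : ℤ)) ∈ latP n hn k' := by
      refine ⟨fun p q hpq => ?_, fun i => by positivity, ?_⟩
      · show ((l.1 q : ℤ)) ≤ ((l.1 p : ℤ))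
        exact_mod_cast l.2.1.1 hpq
      · show ((l.1 ⟨0, hn⟩ : ℤ)) = (k' : ℤ)
        exact_mod_cast l.2.2
    rw [latF, Set.indicator_of_mem hmem, WZ_cast]
  have hsupp : Function.support g ⊆ Set.range ι := by
    intro v hv
    have hmem : v + t ∈ latP n hn k' := by
      by_contra hcon
      exact hv (by rw [hg]; simp only []; rw [latF, Set.indicator_of_notMem hcon])
    obtain ⟨hanti, h0, htop⟩ := hmem
    set l : Fin n → ℕ := fun i => ((v + t) i).toNat with hl
    have hcast : ∀ i, (l i : ℤ) = (v + t) i := fun i => Int.toNat_of_nonneg (h0 i)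
    have hladm : dbetaAdmissible n hn θ m l ∧ l ⟨0, hn⟩ = k' := by
      have htopl : l ⟨0, hn⟩ = k' := by
        have := hcast ⟨0, hn⟩
        rw [htop] at this
        exact_mod_cast this
      refine ⟨⟨fun p q hpq => ?_, ?_⟩, htopl⟩
      · have := hanti hpq
        have h1 := hcast p
        have h2 := hcast q
        omega
      · rw [htopl]; exact hcap
    refine ⟨⟨l, hladm⟩, ?_⟩
    rw [hι]
    funext i
    simp only [Pi.sub_apply]
    rw [hcast i]
    simp
  have hzero : ∀ v ∉ Set.range ι, g v = 0 := by
    intro v hv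
    by_contra hcon
    exact hv (hsupp hcon)
  have hsum' : Summable (g ∘ ι) := by
    have : (g ∘ ι) = fun l => dbetaWeight n θ w l.1 := funext hcomp
    rw [this]
    exact hsub
  have hsumg : Summable g := (hιinj.summable_iff hzero).mp hsum'
  constructor
  · exact hsumg
  · have := hιinj.tsum_eq (f := g) (by
      intro v hv
      exact hsupp hv)
    rw [← this]
    exact tsum_congr hcomp

end Transfer

lemma numer_ineq (n : ℕ) (hn : 0 < n) (θ : ℝ) (hθ : 0 < θ) (m : ℝ≥0∞)
    (w : ℝ → ℝ) (hwpos : ∀ x, 0 < w x)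
    (hwlc : ∀ x y s : ℝ, 0 ≤ s → s ≤ 1 →
      w x ^ s * w y ^ (1 - s) ≤ w (s * x + (1 - s) * y))
    (hsum : Summable (fun l : {l : Fin n → ℕ // dbetaAdmissible n hn θ m l} =>
      dbetaWeight n θ w l.1))
    (k : ℕ) (hk : 1 ≤ k) :
    (∑' l : {l : Fin n → ℕ // dbetaAdmissible n hn θ m l ∧ l ⟨0, hn⟩ = k - 1},
        dbetaWeight n θ w l.1) *
      (∑' l : {l : Fin n → ℕ // dbetaAdmissible n hn θ m l ∧ l ⟨0, hn⟩ = k + 1},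
        dbetaWeight n θ w l.1) ≤
    (∑' l : {l : Fin n → ℕ // dbetaAdmissible n hn θ m l ∧ l ⟨0, hn⟩ = k},
        dbetaWeight n θ w l.1) *
      (∑' l : {l : Fin n → ℕ // dbetaAdmissible n hn θ m l ∧ l ⟨0, hn⟩ = k},
        dbetaWeight n θ w l.1) := by
  classical
  have hsubk : ∀ k' : ℕ, Summable (fun l : {l : Fin n → ℕ //
      dbetaAdmissible n hn θ m l ∧ l ⟨0, hn⟩ = k'} => dbetaWeight n θ w l.1) := by
    intro k'
    exact summable_subtype_and (dbetaWeight n θ w) _ _ hsum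
  by_cases hcap : ((k + 1 : ℕ) : ℝ≥0∞) ≤ m + ENNReal.ofReal (((n - 1 : ℕ) : ℝ) * θ)
  · have hcapk : ((k : ℕ) : ℝ≥0∞) ≤ m + ENNReal.ofReal (((n - 1 : ℕ) : ℝ) * θ) :=
      le_trans (by exact_mod_cast Nat.cast_le.2 (Nat.le_succ k)) hcap
    have hcapk1 : ((k - 1 : ℕ) : ℝ≥0∞) ≤ m + ENNReal.ofReal (((n - 1 : ℕ) : ℝ) * θ) :=
      le_trans (by exact_mod_cast Nat.cast_le.2 (by omega : k - 1 ≤ k + 1)) hcap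
    obtain ⟨S1, E1⟩ := transfer hn hθ hwpos (k - 1) hcapk1 (0 : Fin n → ℤ) (hsubk (k - 1))
    obtain ⟨S2, E2⟩ := transfer hn hθ hwpos (k + 1) hcap (1 : Fin n → ℤ) (hsubk (k + 1))
    obtain ⟨S3, E3⟩ := transfer hn hθ hwpos k hcapk (1 : Fin n → ℤ) (hsubk k)
    obtain ⟨S4, E4⟩ := transfer hn hθ hwpos k hcapk (0 : Fin n → ℤ) (hsubk k)
    have hADh : ∀ a b : Fin n → ℤ,
        latF n hn θ w (k - 1) (a + 0) * latF n hn θ w (k + 1) (b + 1) ≤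
          latF n hn θ w k ((a ⊓ b) + 1) * latF n hn θ w k ((a ⊔ b) + 0) := by
      intro a b
      rw [add_zero, add_zero]
      by_cases hA : a ∈ latP n hn (k - 1)
      · by_cases hB : (b + 1) ∈ latP n hn (k + 1)
        · have ha : Antitone a := hA.1
          have hb : Antitone b := by
            intro p q hpq
            have := hB.1 hpq
            simp only [Pi.add_apply, Pi.one_apply] at this
            omega
          have htopa : a ⟨0, hn⟩ = ((k - 1 : ℕ) : ℤ) := hA.2.2
          have htopb : b ⟨0, hn⟩ + 1 = ((k + 1 : ℕ) : ℤ) := by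
            have := hB.2.2
            simpa only [Pi.add_apply, Pi.one_apply] using this
          have hm3 : (a ⊓ b + 1 : Fin n → ℤ) ∈ latP n hn k := by
            refine ⟨fun p q hpq => ?_, fun i => ?_, ?_⟩
            · simp only [Pi.add_apply, Pi.one_apply, Pi.inf_apply]
              exact add_le_add_left (inf_le_inf (ha hpq) (hb hpq)) 1
            · have h1 := hA.2.1 i
              have h2 := hB.2.1 i
              simp only [Pi.add_apply, Pi.one_apply] at h2 ⊢
              simp only [Pi.inf_apply]
              omega
            · simp only [Pi.add_apply, Pi.one_apply, Pi.inf_apply]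
              omega
          have hm4 : (a ⊔ b : Fin n → ℤ) ∈ latP n hn k := by
            refine ⟨fun p q hpq => ?_, fun i => ?_, ?_⟩
            · simp only [Pi.sup_apply]
              exact sup_le_sup (ha hpq) (hb hpq)
            · have h1 := hA.2.1 i
              simp only [Pi.sup_apply]
              omega
            · simp only [Pi.sup_apply]
              omega
          simp only [latF]
          rw [Set.indicator_of_mem hA, Set.indicator_of_mem hB,
            Set.indicator_of_mem hm3, Set.indicator_of_mem hm4]
          exact core hθ hwpos hwlc ha hb
        · simp only [latF]
          rw [Set.indicator_of_notMem hB, mul_zero]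
          exact mul_nonneg
            (Set.indicator_nonneg (fun u hu => WZ_nonneg hθ hwpos hu.1) _)
            (Set.indicator_nonneg (fun u hu => WZ_nonneg hθ hwpos hu.1) _)
      · simp only [latF]
        rw [Set.indicator_of_notMem hA, zero_mul]
        exact mul_nonneg
          (Set.indicator_nonneg (fun u hu => WZ_nonneg hθ hwpos hu.1) _)
          (Set.indicator_nonneg (fun u hu => WZ_nonneg hθ hwpos hu.1) _)
    have four := tsum_four (fun v : Fin n → ℤ => latF n hn θ w (k - 1) (v + 0))
      (fun v : Fin n → ℤ => latF n hn θ w (k + 1) (v + 1))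
      (fun v : Fin n → ℤ => latF n hn θ w k (v + 1))
      (fun v : Fin n → ℤ => latF n hn θ w k (v + 0))
      (fun v => latF_nonneg hn hθ hwpos _ _) (fun v => latF_nonneg hn hθ hwpos _ _)
      (fun v => latF_nonneg hn hθ hwpos _ _) (fun v => latF_nonneg hn hθ hwpos _ _)
      S1 S2 S3 S4 hADh
    rw [E1, E2, E3, E4] at four
    exact four
  · have hempty : IsEmpty {l : Fin n → ℕ //
        dbetaAdmissible n hn θ m l ∧ l ⟨0, hn⟩ = k + 1} := by
      constructor
      intro l
      apply hcap
      have h2 := l.2.1.2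
      rw [l.2.2] at h2
      exact h2
    have h0 : (∑' l : {l : Fin n → ℕ //
        dbetaAdmissible n hn θ m l ∧ l ⟨0, hn⟩ = k + 1}, dbetaWeight n θ w l.1) = 0 :=
      tsum_empty
    rw [h0, mul_zero]
    exact mul_nonneg
      (tsum_nonneg fun l => dbetaWeight_nonneg hθ hwpos l.2.1.1)
      (tsum_nonneg fun l => dbetaWeight_nonneg hθ hwpos l.2.1.1)

end AuxiliaryLemmas

/-- In the integrable discrete β-ensemble `P_n^{θ,m}` with a positive log-concave
weight function `w` (and finite positive normalizing constant), the distribution of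
the largest part `λ₁` is log-concave: `P(λ₁=k−1)·P(λ₁=k+1) ≤ P(λ₁=k)²` for `k ≥ 1`. -/
theorem logConcave_top_discrete_beta_ensemble
    (n : ℕ) (hn : 0 < n) (θ : ℝ) (hθ : 0 < θ) (m : ℝ≥0∞)
    (w : ℝ → ℝ) (hwpos : ∀ x, 0 < w x)
    (hwlc : ∀ x y s : ℝ, 0 ≤ s → s ≤ 1 →
      w x ^ s * w y ^ (1 - s) ≤ w (s * x + (1 - s) * y))
    (hsum : Summable (fun l : {l : Fin n → ℕ // dbetaAdmissible n hn θ m l} =>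
      dbetaWeight n θ w l.1))
    (hZ : 0 < ∑' l : {l : Fin n → ℕ // dbetaAdmissible n hn θ m l}, dbetaWeight n θ w l.1) :
    ∀ k : ℕ, 1 ≤ k →
      dbetaTopProb n hn θ m w (k - 1) * dbetaTopProb n hn θ m w (k + 1) ≤
        (dbetaTopProb n hn θ m w k) ^ 2 := by
  intro k hk
  have main := numer_ineq n hn θ hθ m w hwpos hwlc hsum k hk
  unfold dbetaTopProb
  rw [div_mul_div_comm, pow_two, div_mul_div_comm, div_eq_mul_inv, div_eq_mul_inv]
  exact mul_le_mul_of_nonneg_right main (inv_nonneg.2 (mul_pos hZ hZ).le)
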